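/- Let b > 0 and define, on the domain D = { (α, β) ∈ ℂ² : |β|²(1 + |α|²)² < b² }, the map F(α, β) = (m_1, m_2) with S = √(b² − |β|²(1 + |α|²)²), m_1 = ((1 − |α|²)/(2(1 + |α|²))) S and m_2 = (|α|²/(1 + |α|²)) S. Then the image of F is exactly { (m_1, m_2) ∈ ℝ² : m_2 ≥ 0, 2 m_1 + m_2 > 0, m_1 + m_2 ≤ b/2 }. -/

import Mathlib

/-- Phase change of the Eguchi-Hanson metric, Case 2: for `b > 0`, on the domain
`D = {(α, β) : |β|²(1+|α|²)² < b²}`, the map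
`F(α,β) = (((1−|α|²)/(2(1+|α|²)))S, (|α|²/(1+|α|²))S)` with
`S = √(b² − |β|²(1+|α|²)²)` has image exactly
`{(m₁, m₂) : m₂ ≥ 0, 2m₁ + m₂ > 0, m₁ + m₂ ≤ b/2}`. -/
theorem eguchi_hanson_phase_change_inner_image
    (b : ℝ) (hb : 0 < b)
    (F : ℂ × ℂ → ℝ × ℝ)
    (hF : ∀ α β : ℂ, F (α, β) =
      (((1 - ‖α‖ ^ 2) / (2 * (1 + ‖α‖ ^ 2))) *
          Real.sqrt (b ^ 2 - ‖β‖ ^ 2 * (1 + ‖α‖ ^ 2) ^ 2),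
        (‖α‖ ^ 2 / (1 + ‖α‖ ^ 2)) *
          Real.sqrt (b ^ 2 - ‖β‖ ^ 2 * (1 + ‖α‖ ^ 2) ^ 2))) :
    F '' { q : ℂ × ℂ |
        ‖q.2‖ ^ 2 * (1 + ‖q.1‖ ^ 2) ^ 2 < b ^ 2 }
      = { m : ℝ × ℝ | 0 ≤ m.2 ∧ 0 < 2 * m.1 + m.2 ∧ m.1 + m.2 ≤ b / 2 } := by
  ext m
  simp only [Set.mem_image, Set.mem_setOf_eq]
  constructor
  · rintro ⟨⟨α, β⟩, hq, rfl⟩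
    rw [hF]
    simp only [Set.mem_setOf_eq] at hq ⊢
    set A := ‖α‖ ^ 2 with hAdef
    set B := ‖β‖ ^ 2 with hBdef
    have hA : 0 ≤ A := by positivity
    have h1A : 0 < 1 + A := by linarith
    have harg : 0 < b ^ 2 - B * (1 + A) ^ 2 := by linarith
    set s := Real.sqrt (b ^ 2 - B * (1 + A) ^ 2) with hsdef
    have hs : 0 < s := Real.sqrt_pos.mpr harg
    have hsb : s ≤ b := by
      have : s ≤ Real.sqrt (b ^ 2) := by
        apply Real.sqrt_le_sqrt
        nlinarith [sq_nonneg ‖β‖, sq_nonneg (1 + A)]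
      rwa [Real.sqrt_sq hb.le] at this
    refine ⟨by positivity, ?_, ?_⟩
    · have : 2 * ((1 - A) / (2 * (1 + A)) * s) + A / (1 + A) * s = s / (1 + A) := by
        field_simp
        ring
      rw [this]
      positivity
    · have : (1 - A) / (2 * (1 + A)) * s + A / (1 + A) * s = s / 2 := by
        field_simp
        ring
      rw [this]
      linarith
  · rintro ⟨h2, h1, h3⟩
    set s := 2 * (m.1 + m.2) with hsdef
    have hs : 0 < s := by simp only [hsdef]; linarith
    have hsb : s ≤ b := by linarith
    have hc : 0 < 2 * m.1 + m.2 := h1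
    set a := m.2 / (2 * m.1 + m.2) with hadef
    have ha : 0 ≤ a := div_nonneg h2 hc.le
    have h1a : 1 + a = s / (2 * m.1 + m.2) := by
      rw [hadef, hsdef]; field_simp; ring
    refine ⟨(Complex.ofReal (Real.sqrt a),
        Complex.ofReal (Real.sqrt (b ^ 2 - s ^ 2) * (2 * m.1 + m.2) / s)), ?_, ?_⟩
    all_goals
      have hA : ‖Complex.ofReal (Real.sqrt a)‖ ^ 2 = a := by
        rw [Complex.norm_real, Real.norm_eq_abs, abs_of_nonneg (Real.sqrt_nonneg a), Real.sq_sqrt ha]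
      have hbs : 0 ≤ b ^ 2 - s ^ 2 := by nlinarith
      have hB : ‖Complex.ofReal (Real.sqrt (b ^ 2 - s ^ 2) * (2 * m.1 + m.2) / s)‖ ^ 2
          = (b ^ 2 - s ^ 2) * (2 * m.1 + m.2) ^ 2 / s ^ 2 := by
        rw [Complex.norm_real, Real.norm_eq_abs, abs_of_nonneg (by positivity), div_pow, mul_pow,
          Real.sq_sqrt hbs]
      have hprod : ‖Complex.ofReal (Real.sqrt (b ^ 2 - s ^ 2) * (2 * m.1 + m.2) / s)‖ ^ 2
          * (1 + ‖Complex.ofReal (Real.sqrt a)‖ ^ 2) ^ 2 = b ^ 2 - s ^ 2 := by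
        rw [hB, hA, h1a]
        field_simp
    · simp only [Set.mem_setOf_eq, hprod]
      nlinarith
    · rw [hF]
      have hss : Real.sqrt (b ^ 2 - (b ^ 2 - s ^ 2)) = s := by
        rw [show b ^ 2 - (b ^ 2 - s ^ 2) = s ^ 2 by ring, Real.sqrt_sq hs.le]
      rw [hA] at hprod
      rw [hA, hprod, hss]
      have hm1 : (1 - a) / (2 * (1 + a)) * s = m.1 := by
        rw [hadef, h1a, hsdef]; field_simp [show m.1 + m.2 ≠ 0 by linarith]; ring
      have hm2 : a / (1 + a) * s = m.2 := by
        rw [hadef, h1a, hsdef]; field_simp [show m.1 + m.2 ≠ 0 by linarith]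
      rw [hm1, hm2]
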